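/- Let φ be a supersymmetric state with respect to a superderivation δ and (π, H, Ω) its GNS representation. Then Q π(A)Ω := π(δ(A))Ω is a well-defined closable linear operator on the dense subspace π(A₀)Ω, satisfying QΩ = 0 and Q*Ω = 0. -/

import Mathlib

open scoped ComplexOrder

/-- The linear map `a ↦ π a Ω` from the algebra into the Hilbert space. -/
noncomputable def gnsVec {F H : Type*} [NormedRing F] [StarRing F] [NormedAlgebra ℂ F]
    [NormedAddCommGroup H] [InnerProductSpace ℂ H] [CompleteSpace H]
    (π : F →⋆ₐ[ℂ] (H →L[ℂ] H)) (Ω : H) : F →ₗ[ℂ] H where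
  toFun a := π a Ω
  map_add' a b := by simp
  map_smul' c a := by simp

/-- Let `φ` be a supersymmetric state with respect to `δ` and
`(π, H, Ω)` its GNS representation.  Then `Q (π A Ω) := π (δ A) Ω` is a
well-defined closable linear operator on the dense subspace `π(A₀)Ω`, and it
satisfies `Q Ω = 0` and `Q* Ω = 0`. -/
theorem supercharge_well_defined_closable
    {F : Type*} [NormedRing F] [StarRing F] [CStarRing F] [NormedAlgebra ℂ F]
    [StarModule ℂ F] [CompleteSpace F]
    {H : Type*} [NormedAddCommGroup H] [InnerProductSpace ℂ H] [CompleteSpace H]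
    (γ : F ≃⋆ₐ[ℂ] F) (hγ : ∀ x, γ (γ x) = x)
    (A₀ : StarSubalgebra ℂ F) (hA₀ : ∀ a ∈ A₀, γ a ∈ A₀)
    (δ : F →ₗ[ℂ] F)
    (hodd : ∀ a ∈ A₀, δ (γ a) = - γ (δ a))
    (hleib : ∀ a ∈ A₀, ∀ b ∈ A₀, δ (a * b) = δ a * b + γ a * δ b)
    (φ : F →ₗ[ℂ] ℂ) (hφpos : ∀ x : F, 0 ≤ φ (star x * x)) (hφ1 : φ 1 = 1)
    (hsusy : ∀ a ∈ A₀, φ (δ a) = 0)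
    (π : F →⋆ₐ[ℂ] (H →L[ℂ] H)) (Ω : H)
    (hGNS : ∀ x : F, φ x = inner ℂ Ω (π x Ω))
    (hdense :
      Dense (((Subalgebra.toSubmodule A₀.toSubalgebra).map (gnsVec π Ω) : Submodule ℂ H)
        : Set H)) :
    ∃ Q : H →ₗ.[ℂ] H,
      Q.domain = (Subalgebra.toSubmodule A₀.toSubalgebra).map (gnsVec π Ω) ∧
      (∀ a ∈ A₀, ∀ h : π a Ω ∈ Q.domain, Q ⟨π a Ω, h⟩ = π (δ a) Ω) ∧
      Q.IsClosable ∧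
      (Ω ∈ Q.domain) ∧ (∀ h : Ω ∈ Q.domain, Q ⟨Ω, h⟩ = 0) ∧
      (Ω ∈ Q.adjoint.domain) ∧ (∀ h : Ω ∈ Q.adjoint.domain, Q.adjoint ⟨Ω, h⟩ = 0) := by
  classical
  -- δ kills the unit
  have hδ1 : δ (1 : F) = 0 := by
    have h := hleib 1 A₀.one_mem 1 A₀.one_mem
    simp only [mul_one, one_mul, map_one] at h
    have h2 : δ 1 + δ 1 = δ 1 + 0 := by rw [add_zero]; exact h.symm
    exact add_left_cancel h2
  -- basic GNS pairing
  have pair : ∀ x y : F, φ (x * y) = (inner ℂ ((π (star x)) Ω) (π y Ω) : ℂ) := by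
    intro x y
    rw [hGNS, map_mul, ContinuousLinearMap.mul_apply, map_star,
      ContinuousLinearMap.star_eq_adjoint, ContinuousLinearMap.adjoint_inner_left]
  have pairL : ∀ b y : F, (inner ℂ (π b Ω) (π y Ω) : ℂ) = φ (star b * y) := by
    intro b y
    rw [pair (star b) y, star_star]
  -- key superpartner identity
  have main : ∀ b ∈ A₀, ∀ a ∈ A₀,
      (inner ℂ (π b Ω) (π (δ a) Ω) : ℂ)
        = - inner ℂ (π (star (δ (star (γ b)))) Ω) (π a Ω) := by
    intro b hb a ha
    have hc : star (γ b) ∈ A₀ := star_mem (hA₀ b hb)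
    have hγc : γ (star (γ b)) = star b := by rw [map_star, hγ]
    have h1 := hleib _ hc a ha
    have h2 : φ (δ (star (γ b) * a)) = 0 := hsusy _ (mul_mem hc ha)
    rw [h1, map_add, hγc] at h2
    calc (inner ℂ (π b Ω) (π (δ a) Ω) : ℂ) = φ (star b * δ a) := pairL b (δ a)
      _ = - φ (δ (star (γ b)) * a) := eq_neg_of_add_eq_zero_right h2
      _ = - inner ℂ (π (star (δ (star (γ b)))) Ω) (π a Ω) := by rw [pair]
  -- the graph
  set Λ : F →ₗ[ℂ] H × H := LinearMap.prod (gnsVec π Ω) ((gnsVec π Ω).comp δ) with hΛ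
  set M : Submodule ℂ F := Subalgebra.toSubmodule A₀.toSubalgebra with hM
  set G : Submodule ℂ (H × H) := M.map Λ with hG
  have hmemM : ∀ a : F, a ∈ M ↔ a ∈ A₀ := fun a => Iff.rfl
  -- the closure of the graph is still a graph
  have hclos : ∀ p : H × H, p ∈ G.topologicalClosure → p.1 = 0 → p.2 = 0 := by
    intro p hp hp1
    have hsub : ∀ b ∈ A₀,
        (inner ℂ (π b Ω) p.2 : ℂ) = - inner ℂ (π (star (δ (star (γ b)))) Ω) p.1 := by
      intro b hb
      have hcl : p ∈ closure (G : Set (H × H)) := by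
        rw [← Submodule.topologicalClosure_coe]; exact hp
      have hCs : IsClosed {q : H × H |
          (inner ℂ (π b Ω) q.2 : ℂ) = - inner ℂ (π (star (δ (star (γ b)))) Ω) q.1} :=
        isClosed_eq (continuous_const.inner continuous_snd)
          (continuous_const.inner continuous_fst).neg
      have hGC : (G : Set (H × H)) ⊆ {q : H × H |
          (inner ℂ (π b Ω) q.2 : ℂ) = - inner ℂ (π (star (δ (star (γ b)))) Ω) q.1} := by
        rintro q ⟨a, haM, rfl⟩
        exact main b hb a haM
      exact closure_minimal hGC hCs hcl
    refine hdense.eq_zero_of_inner_right ℂ fun v hv => ?_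
    obtain ⟨a, haM, hav⟩ := hv
    have : (inner ℂ (π a Ω) p.2 : ℂ) = 0 := by
      rw [hsub a haM, hp1, inner_zero_right, neg_zero]
    rw [← hav]
    exact this
  have hgG : ∀ x : H × H, x ∈ G → x.fst = 0 → x.snd = 0 := fun x hx =>
    hclos x (Submodule.le_topologicalClosure G hx)
  have hgC : ∀ x : H × H, x ∈ G.topologicalClosure → x.fst = 0 → x.snd = 0 := hclos
  refine ⟨G.toLinearPMap, ?_, ?_, ?_, ?_, ?_, ?_, ?_⟩
  case refine_1 =>
    rw [Submodule.toLinearPMap_domain, hG, ← Submodule.map_comp]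
    rfl
  case refine_2 =>
    intro a ha h
    have h' : π a Ω ∈ G.map (LinearMap.fst ℂ H H) := h
    have h1 : (π a Ω, G.toLinearPMap ⟨π a Ω, h⟩) ∈ G :=
      Submodule.mem_graph_toLinearPMap hgG ⟨π a Ω, h'⟩
    have h2 : (π a Ω, π (δ a) Ω) ∈ G := ⟨a, ha, rfl⟩
    exact (Submodule.existsUnique_from_graph
      (fun {x} hx hx' => hgG x hx hx') h').unique h1 h2
  case refine_3 =>
    refine ⟨G.topologicalClosure.toLinearPMap, ?_⟩
    rw [Submodule.toLinearPMap_graph_eq G hgG,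
      Submodule.toLinearPMap_graph_eq G.topologicalClosure hgC]
  case refine_4 =>
    exact ⟨(Ω, 0), ⟨1, A₀.one_mem, by
      show (π 1 Ω, π (δ 1) Ω) = (Ω, 0)
      rw [hδ1, map_one, map_zero]
      simp⟩, rfl⟩
  case refine_5 =>
    intro h
    have hΩG : ((Ω, 0) : H × H) ∈ G := ⟨1, A₀.one_mem, by
      show (π 1 Ω, π (δ 1) Ω) = (Ω, 0)
      rw [hδ1, map_one, map_zero]
      simp⟩
    have h1 : (Ω, G.toLinearPMap ⟨Ω, h⟩) ∈ G :=
      Submodule.mem_graph_toLinearPMap hgG ⟨Ω, h⟩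
    exact (Submodule.existsUnique_from_graph
      (fun {x} hx hx' => hgG x hx hx') h).unique h1 hΩG
  all_goals {
    have hQdense : Dense ((G.toLinearPMap.domain : Submodule ℂ H) : Set H) := by
      have : G.toLinearPMap.domain = M.map (gnsVec π Ω) := by
        rw [Submodule.toLinearPMap_domain, hG, ← Submodule.map_comp]; rfl
      rw [this]; exact hdense
    have hval : ∀ x : G.toLinearPMap.domain, (inner ℂ Ω (G.toLinearPMap x) : ℂ) = 0 := by
      intro x
      obtain ⟨p, hpG, hp1⟩ := x.2
      obtain ⟨a, haM, rfl⟩ := hpG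
      have h1 : ((x : H), G.toLinearPMap x) ∈ G :=
        Submodule.mem_graph_toLinearPMap hgG x
      have h2 : ((x : H), π (δ a) Ω) ∈ G := by
        rw [← hp1]
        exact ⟨a, haM, rfl⟩
      have heq : G.toLinearPMap x = π (δ a) Ω :=
        (Submodule.existsUnique_from_graph
          (fun {y} hy hy' => hgG y hy hy') x.2).unique h1 h2
      rw [heq, ← hGNS]
      exact hsusy a haM
    first
    | exact LinearPMap.mem_adjoint_domain_of_exists Ω
        ⟨0, fun x => by rw [inner_zero_left]; exact (hval x).symm⟩
    | exact fun h => LinearPMap.adjoint_apply_eq hQdense ⟨Ω, h⟩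
        (fun x => by rw [inner_zero_left]; exact (hval x).symm)
  }
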